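/- arXiv:0810.1261 — 3 statements merged into one kernel-verified Lean document; each statement's English description precedes it below -/
import Mathlib

section
/- Let n_{i,j} ≥ 0 (1 ≤ i,j ≤ v) be real counts satisfying Σ_{j=1}^v n_{i,j} = Σ_{j=1}^v n_{j,i} = n_i > 0 for every i (as holds for circularly written texts). Define w_{i,j} = (n_{i,j} + n_{j,i})/2 and d_i = n_i. Then among all row-stochastic v×v matrices P, the circular likelihood ∏_{i,j=1}^v p_{i,j}^{n_{i,j}+n_{j,i}} is maximized by P = D⁻¹W, i.e. by p_{i,j} = (n_{i,j}+n_{j,i})/(2 n_i), where D is the diagonal matrix with diagonal entries d_i. -/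
open Matrix BigOperators Finset

/-- Gibbs' inequality (row version): for nonnegative weights `m` with positive
sum `M` and a probability vector `p`, `∏ p j ^ m j ≤ ∏ (m j / M) ^ m j`. -/
lemma gibbs_row {n : ℕ} (m p : Fin n → ℝ) (hm : ∀ j, 0 ≤ m j)
    (hp : ∀ j, 0 ≤ p j) (hps : ∑ j, p j = 1) (hM : 0 < ∑ j, m j) :
    ∏ j, p j ^ m j ≤ ∏ j, (m j / ∑ k, m k) ^ m j := by
  set M : ℝ := ∑ k, m k with hMdef
  have hMne : M ≠ 0 := ne_of_gt hM
  set w : Fin n → ℝ := fun j => m j / M with hw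
  set z : Fin n → ℝ := fun j => if m j = 0 then 1 else p j * M / m j with hz
  have hwnn : ∀ j, 0 ≤ w j := fun j => div_nonneg (hm j) hM.le
  have hznn : ∀ j, 0 ≤ z j := by
    intro j
    by_cases h : m j = 0
    · simp [hz, h]
    · simp only [hz, h, if_false]
      exact div_nonneg (mul_nonneg (hp j) hM.le) (hm j)
  have hwsum : ∑ j, w j = 1 := by
    simp only [hw, ← Finset.sum_div]
    exact div_self hMne
  have hgm : ∏ j, z j ^ w j ≤ ∑ j, w j * z j :=
    Real.geom_mean_le_arith_mean_weighted _ _ _ (fun j _ => hwnn j)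
      hwsum (fun j _ => hznn j)
  have hsum_le : ∑ j, w j * z j ≤ 1 := by
    calc ∑ j, w j * z j ≤ ∑ j, p j := by
          apply Finset.sum_le_sum
          intro j _
          by_cases h : m j = 0
          · simp [hw, hz, h, hp j]
          · simp only [hw, hz, h, if_false]
            have hmj : 0 < m j := (hm j).lt_of_ne' h
            have : m j / M * (p j * M / m j) = p j := by field_simp
            rw [this]
      _ = 1 := hps
  have hprod_le : ∏ j, z j ^ w j ≤ 1 := hgm.trans hsum_le
  have hprod_nn : 0 ≤ ∏ j, z j ^ w j :=
    Finset.prod_nonneg fun j _ => Real.rpow_nonneg (hznn j) _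
  have key : ∏ j, z j ^ m j ≤ 1 := by
    have heq : ∏ j, z j ^ m j = (∏ j, z j ^ w j) ^ M := by
      rw [← Real.finset_prod_rpow _ _ (fun j _ => Real.rpow_nonneg (hznn j) _)]
      refine Finset.prod_congr rfl fun j _ => ?_
      rw [← Real.rpow_mul (hznn j)]
      congr 1
      exact (div_mul_cancel₀ (m j) hMne).symm
    rw [heq]
    calc (∏ j, z j ^ w j) ^ M ≤ (1 : ℝ) ^ M :=
          Real.rpow_le_rpow hprod_nn hprod_le hM.le
      _ = 1 := Real.one_rpow M
  have hdecomp : ∏ j, p j ^ m j = (∏ j, z j ^ m j) * ∏ j, (m j / M) ^ m j := by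
    rw [← Finset.prod_mul_distrib]
    refine Finset.prod_congr rfl fun j _ => ?_
    by_cases h : m j = 0
    · simp [h]
    · rw [← Real.mul_rpow (hznn j) (div_nonneg (hm j) hM.le)]
      congr 1
      simp only [hz, h, if_false]
      field_simp
  rw [hdecomp]
  calc (∏ j, z j ^ m j) * ∏ j, (m j / M) ^ m j
      ≤ 1 * ∏ j, (m j / M) ^ m j := by
        apply mul_le_mul_of_nonneg_right key
        exact Finset.prod_nonneg fun j _ =>
          Real.rpow_nonneg (div_nonneg (hm j) hM.le) _
    _ = ∏ j, (m j / M) ^ m j := one_mul _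

/-- Lemma 2: with the circular writing model, the maximum likelihood
row-stochastic transition matrix is `P = D⁻¹ W`, i.e.
`p i j = (n i j + n j i) / (2 * n i)`: it is row-stochastic, and every
row-stochastic matrix `P` has circular likelihood at most that of this
matrix (real powers, with the convention `0 ^ 0 = 1`). -/
theorem max_likelihood_circular_transition_matrix
    (v : ℕ) (N : Matrix (Fin v) (Fin v) ℝ)
    (hN : ∀ i j, 0 ≤ N i j)
    (hbal : ∀ i, ∑ j, N i j = ∑ j, N j i)
    (hpos : ∀ i, 0 < ∑ j, N i j)
    (P : Matrix (Fin v) (Fin v) ℝ)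
    (hPnn : ∀ i j, 0 ≤ P i j)
    (hProw : ∀ i, ∑ j, P i j = 1) :
    (∀ i j, 0 ≤ (N i j + N j i) / (2 * ∑ k, N i k)) ∧
    (∀ i, ∑ j, (N i j + N j i) / (2 * ∑ k, N i k) = 1) ∧
    (∏ i, ∏ j, (P i j) ^ (N i j + N j i)) ≤
      ∏ i, ∏ j, ((N i j + N j i) / (2 * ∑ k, N i k)) ^ (N i j + N j i) := by
  have hrowsum : ∀ i, ∑ j, (N i j + N j i) = 2 * ∑ k, N i k := by
    intro i
    rw [Finset.sum_add_distrib, ← hbal i]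
    ring
  refine ⟨fun i j => div_nonneg (add_nonneg (hN i j) (hN j i)) (mul_nonneg (by norm_num) (hpos i).le),
    fun i => ?_, ?_⟩
  · rw [← Finset.sum_div, hrowsum i]
    exact div_self (mul_ne_zero two_ne_zero (hpos i).ne')
  · apply Finset.prod_le_prod
    · intro i _
      exact Finset.prod_nonneg fun j _ => Real.rpow_nonneg (hPnn i j) _
    · intro i _
      have := gibbs_row (fun j => N i j + N j i) (fun j => P i j)
        (fun j => add_nonneg (hN i j) (hN j i)) (fun j => hPnn i j) (hProw i)
        (by rw [hrowsum i]; linarith [hpos i])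
      simpa [hrowsum i] using this
end

section
/- Let W be a v×v symmetric real matrix with nonnegative entries, D the diagonal matrix with diagonal entries d_i = Σ_{j=1}^v w_{i,j} > 0, P = D⁻¹W, and Y ∈ ℝ^{v×q} with columns y_k satisfying (D − W)y_k = λ_k D y_k and YᵀDY = I. For each k define the soft escape quantity e_k = (1/2) Σ_{i,j=1}^v ( d_i y²_{i,k} p_{i,j} − y_{i,k} w_{i,j} y_{j,k} ). Then e_k = λ_k/2 for every k, and hence ν(Y) = Σ_{k=1}^q κ_k(Y) = 4 Σ_{k=1}^q e_k, where κ_k(Y) = Σ_{i,j=1}^v w_{i,j}(y_{i,k} − y_{j,k})². -/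
open Matrix BigOperators Finset

/-- Main Theorem (algebraic form): for `P = D⁻¹ W` and `D`-orthonormal
generalized eigenvectors `y_k` with eigenvalues `λ_k`, the soft escape
quantities `e_k = (1/2) ∑ i j, (d i * y i k ^ 2 * p i j - y i k * w i j * y j k)`
satisfy `e_k = λ_k / 2`, hence `ν(Y) = ∑ k, κ_k(Y) = 4 ∑ k, e_k`. -/
theorem soft_escape_probabilities
    (v q : ℕ) (W : Matrix (Fin v) (Fin v) ℝ)
    (hsym : ∀ i j, W i j = W j i)
    (hnn : ∀ i j, 0 ≤ W i j)
    (hd : ∀ i, 0 < ∑ j, W i j)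
    (Y : Matrix (Fin v) (Fin q) ℝ) (lam : Fin q → ℝ)
    (heig : ∀ k, (Matrix.diagonal (fun i => ∑ j, W i j) - W) *ᵥ (fun i => Y i k)
          = lam k • ((Matrix.diagonal (fun i => ∑ j, W i j)) *ᵥ (fun i => Y i k)))
    (hortho : Yᵀ * (Matrix.diagonal (fun i => ∑ j, W i j)) * Y = 1) :
    (∀ k, (1 / 2) * ∑ i, ∑ j,
        ((∑ l, W i l) * (Y i k) ^ 2 * (W i j / ∑ l, W i l) - Y i k * W i j * Y j k)
      = lam k / 2) ∧
    (∑ k, ∑ i, ∑ j, W i j * (Y i k - Y j k) ^ 2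
      = 4 * ∑ k, (1 / 2) * ∑ i, ∑ j,
          ((∑ l, W i l) * (Y i k) ^ 2 * (W i j / ∑ l, W i l) - Y i k * W i j * Y j k)) := by
  have hdne : ∀ i, (∑ l, W i l) ≠ 0 := fun i => (hd i).ne'
  have hdiag : ∀ (k : Fin q) (i : Fin v),
      (∑ x, Matrix.diagonal (fun i => ∑ j, W i j) i x * Y x k) = (∑ l, W i l) * Y i k := by
    intro k i
    rw [Finset.sum_eq_single i]
    · simp [Matrix.diagonal_apply_eq]
    · intro b _ hb
      simp [Matrix.diagonal_apply_ne' _ hb]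
    · simp
  -- the term simplifies since d_i cancels
  have hterm : ∀ (k : Fin q) (i j : Fin v),
      (∑ l, W i l) * (Y i k) ^ 2 * (W i j / ∑ l, W i l) - Y i k * W i j * Y j k
      = W i j * (Y i k) ^ 2 - Y i k * W i j * Y j k := by
    intro k i j
    rw [mul_comm ((∑ l, W i l)) ((Y i k) ^ 2), mul_assoc, mul_div_cancel₀ _ (hdne i)]
    ring
  -- orthonormality entrywise
  have horthk : ∀ k, ∑ i, (∑ l, W i l) * (Y i k) ^ 2 = 1 := by
    intro k
    have h := congrFun (congrFun hortho k) k
    rw [Matrix.mul_assoc] at h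
    simp only [Matrix.mul_apply, Matrix.transpose_apply, Matrix.one_apply_eq] at h
    calc ∑ i, (∑ l, W i l) * (Y i k) ^ 2
        = ∑ i, Y i k * ((∑ l, W i l) * Y i k) := by
          apply Finset.sum_congr rfl; intro i _; ring
      _ = ∑ i, Y i k * (∑ x, Matrix.diagonal (fun i => ∑ j, W i j) i x * Y x k) := by
          apply Finset.sum_congr rfl; intro i _; rw [hdiag k i]
      _ = 1 := h
  -- eigen equation entrywise
  have heigk : ∀ (k : Fin q) (i : Fin v),
      (∑ l, W i l) * Y i k - ∑ j, W i j * Y j k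
        = lam k * ((∑ l, W i l) * Y i k) := by
    intro k i
    have h := congrFun (heig k) i
    rw [Matrix.sub_mulVec] at h
    simp only [Matrix.mulVec, dotProduct, Pi.sub_apply, Pi.smul_apply, smul_eq_mul] at h
    rwa [hdiag k i] at h
  -- key identity: the double sum equals lam k
  have hS : ∀ k, ∑ i, ∑ j, (W i j * (Y i k) ^ 2 - Y i k * W i j * Y j k) = lam k := by
    intro k
    have : ∑ i, ∑ j, (W i j * (Y i k) ^ 2 - Y i k * W i j * Y j k)
        = ∑ i, Y i k * ((∑ l, W i l) * Y i k - ∑ j, W i j * Y j k) := by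
      apply Finset.sum_congr rfl
      intro i _
      rw [Finset.sum_sub_distrib, ← Finset.sum_mul, mul_sub, Finset.mul_sum]
      congr 1
      · ring
      · apply Finset.sum_congr rfl; intro j _; ring
    rw [this]
    calc ∑ i, Y i k * ((∑ l, W i l) * Y i k - ∑ j, W i j * Y j k)
        = ∑ i, Y i k * (lam k * ((∑ l, W i l) * Y i k)) := by
          apply Finset.sum_congr rfl; intro i _; rw [heigk k i]
      _ = lam k * ∑ i, (∑ l, W i l) * (Y i k) ^ 2 := by
          rw [Finset.mul_sum]; apply Finset.sum_congr rfl; intro i _; ring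
      _ = lam k := by rw [horthk k, mul_one]
  have hE : ∀ k, (1 / 2) * ∑ i, ∑ j,
      ((∑ l, W i l) * (Y i k) ^ 2 * (W i j / ∑ l, W i l) - Y i k * W i j * Y j k)
      = lam k / 2 := by
    intro k
    have : (∑ i, ∑ j, ((∑ l, W i l) * (Y i k) ^ 2 * (W i j / ∑ l, W i l)
        - Y i k * W i j * Y j k))
        = ∑ i, ∑ j, (W i j * (Y i k) ^ 2 - Y i k * W i j * Y j k) := by
      apply Finset.sum_congr rfl; intro i _
      apply Finset.sum_congr rfl; intro j _
      exact hterm k i j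
    rw [this, hS k]; ring
  refine ⟨hE, ?_⟩
  -- κ_k = 2 λ_k
  have hkappa : ∀ k, ∑ i, ∑ j, W i j * (Y i k - Y j k) ^ 2 = 2 * lam k := by
    intro k
    have hswap : ∑ i, ∑ j, W i j * (Y j k) ^ 2 = ∑ i, ∑ j, W i j * (Y i k) ^ 2 := by
      rw [Finset.sum_comm]
      apply Finset.sum_congr rfl; intro i _
      apply Finset.sum_congr rfl; intro j _
      rw [hsym i j]
    have : ∑ i, ∑ j, W i j * (Y i k - Y j k) ^ 2
        = (∑ i, ∑ j, W i j * (Y i k) ^ 2) + (∑ i, ∑ j, W i j * (Y j k) ^ 2)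
          - 2 * ∑ i, ∑ j, Y i k * W i j * Y j k := by
      rw [Finset.mul_sum]
      rw [← Finset.sum_add_distrib, ← Finset.sum_sub_distrib]
      apply Finset.sum_congr rfl; intro i _
      rw [Finset.mul_sum, ← Finset.sum_add_distrib, ← Finset.sum_sub_distrib]
      apply Finset.sum_congr rfl; intro j _
      ring
    rw [this, hswap]
    have h2 : (∑ i, ∑ j, W i j * (Y i k) ^ 2) - ∑ i, ∑ j, Y i k * W i j * Y j k
        = lam k := by
      rw [← hS k, ← Finset.sum_sub_distrib]
      apply Finset.sum_congr rfl; intro i _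
      rw [Finset.sum_sub_distrib]
    linarith
  calc ∑ k, ∑ i, ∑ j, W i j * (Y i k - Y j k) ^ 2
      = ∑ k, 2 * lam k := by apply Finset.sum_congr rfl; intro k _; exact hkappa k
    _ = 4 * ∑ k, lam k / 2 := by rw [Finset.mul_sum]; apply Finset.sum_congr rfl; intro k _; ring
    _ = 4 * ∑ k, (1 / 2) * ∑ i, ∑ j,
          ((∑ l, W i l) * (Y i k) ^ 2 * (W i j / ∑ l, W i l) - Y i k * W i j * Y j k) := by
        congr 1; apply Finset.sum_congr rfl; intro k _; rw [hE k]
end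

section
/- Let W be a v×v symmetric real matrix, D the diagonal matrix with diagonal entries d_i = Σ_{j=1}^v w_{i,j} > 0, V_1, …, V_q a partition of {1, …, v} into nonempty sets with indicator matrix Z ∈ {0,1}^{v×q}, and Ẑ ∈ ℝ^{v×q} the matrix with columns ẑ_k = z_k / √(α_k(Z)), where α_k(Z) = Σ_{i∈V_k} d_i. Then ẐᵀDẐ = I (the q×q identity matrix) and ν(Ẑ) = Σ_{k=1}^q κ_k(Ẑ) = μ(Z) = Σ_{k=1}^q κ_k(Z)/α_k(Z), where κ_k(Y) = Σ_{i,j=1}^v w_{i,j}(y_{i,k} − y_{j,k})². -/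
open Matrix BigOperators Finset Real

/-- The `D`-normalized indicator matrix `Ẑ`, with columns
`ẑ_k = z_k / √(α_k(Z))` where `α_k(Z) = ∑_{i ∈ V_k} d i`, satisfies
`Ẑᵀ D Ẑ = I` and `ν(Ẑ) = μ(Z)`: the relaxed objective evaluated at `Ẑ`
coincides with the multiway normalized cuts objective of the partition. -/
theorem normalized_indicator_matrix
    (v q : ℕ) (W : Matrix (Fin v) (Fin v) ℝ)
    (hsym : ∀ i j, W i j = W j i)
    (hd : ∀ i, 0 < ∑ j, W i j)
    (V : Fin q → Finset (Fin v))
    (hne : ∀ k, (V k).Nonempty)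
    (hpart : ∀ i, ∃! k, i ∈ V k)
    (Zhat : Matrix (Fin v) (Fin q) ℝ)
    (hZhat : ∀ i k, Zhat i k
        = (if i ∈ V k then (1 : ℝ) else 0) / Real.sqrt (∑ i' ∈ V k, ∑ l, W i' l)) :
    Zhatᵀ * (Matrix.diagonal (fun i => ∑ j, W i j)) * Zhat = 1 ∧
    ∑ k, ∑ i, ∑ j, W i j * (Zhat i k - Zhat j k) ^ 2
      = ∑ k, (∑ i, ∑ j, W i j *
            ((if i ∈ V k then (1 : ℝ) else 0) - (if j ∈ V k then (1 : ℝ) else 0)) ^ 2)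
          / (∑ i' ∈ V k, ∑ l, W i' l) := by
  have hα : ∀ k, 0 < ∑ i' ∈ V k, ∑ l, W i' l := fun k =>
    Finset.sum_pos (fun i _ => hd i) (hne k)
  constructor
  · ext k l
    rw [Matrix.mul_apply]
    simp only [Matrix.mul_diagonal, Matrix.transpose_apply]
    by_cases hkl : k = l
    · subst hkl
      rw [Matrix.one_apply_eq]
      have hterm : ∀ j, Zhat j k * (∑ m, W j m) * Zhat j k
          = if j ∈ V k then (∑ m, W j m) / (∑ i' ∈ V k, ∑ l, W i' l) else 0 := by
        intro j
        rw [hZhat]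
        by_cases h : j ∈ V k <;> simp [h]
        rw [mul_comm, ← mul_assoc, ← mul_inv,
          Real.mul_self_sqrt (hα k).le, inv_mul_eq_div]
      simp only [hterm]
      rw [Finset.sum_ite_mem, Finset.univ_inter, ← Finset.sum_div,
        div_self (hα k).ne']
    · rw [Matrix.one_apply_ne hkl]
      apply Finset.sum_eq_zero
      intro j _
      rw [hZhat, hZhat]
      by_cases h1 : j ∈ V k
      · have h2 : j ∉ V l := fun h2 => hkl ((hpart j).unique h1 h2)
        simp [h2]
      · simp [h1]
  · refine Finset.sum_congr rfl fun k _ => ?_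
    rw [Finset.sum_div]
    refine Finset.sum_congr rfl fun i _ => ?_
    rw [Finset.sum_div]
    refine Finset.sum_congr rfl fun j _ => ?_
    rw [hZhat, hZhat, div_sub_div_same, div_pow,
      Real.sq_sqrt (hα k).le, mul_div_assoc]
end
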